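/- Let n, k ∈ ℕ with n, k ≥ 1, and let F be a family of infinite regular languages over the binary alphabet {0,1} such that |F| = k and each L ∈ F is accepted by a (nondeterministic) finite automaton with at most n states. Then F is 2^(n^k)-generatable. -/

import Mathlib

/-- A family `F` of languages over alphabet `α` is `m`-generatable: there exists a
generator `G` (mapping finite sequences of words to sets of words) such that for every
`L ∈ F`, every `n ≥ m` and every `n` pairwise-distinct words of `L`, the generated set
is an infinite subset of `L`. -/
def IsMGeneratable {α : Type*} (m : ℕ) (F : Set (Set (List α))) : Prop :=
  ∃ G : List (List α) → Set (List α),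
    ∀ L ∈ F, ∀ ws : List (List α), ws.Nodup → m ≤ ws.length →
      (∀ w ∈ ws, w ∈ L) → (G ws).Infinite ∧ G ws ⊆ L

/-- A (nondeterministic) finite automaton with state type `σ`: an initial state, a set of
final states, and a transition relation `Δ ⊆ Q × Σ × Q`. -/
structure FinAut (α : Type*) (σ : Type*) where
  start : σ
  accept : Set σ
  trans : σ → α → σ → Prop

/-- The language accepted by a finite automaton: words admitting a run from the initial
state ending in a final state. -/
def FinAut.accepts {α σ : Type*} (M : FinAut α σ) : Set (List α) :=
  NFA.accepts ⟨fun s a => {t | M.trans s a t}, {M.start}, M.accept⟩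

namespace MGenAux

variable {α : Type*} {σ τ : Type*}

/-- Paths (runs) of a transition relation. -/
inductive RPath (δ : σ → α → σ → Prop) : σ → List α → σ → Prop
  | nil (s : σ) : RPath δ s [] s
  | cons {s t u : σ} {a : α} {w : List α} :
      δ s a t → RPath δ t w u → RPath δ s (a :: w) u

lemma rpath_nil_iff {δ : σ → α → σ → Prop} {s t : σ} :
    RPath δ s [] t ↔ s = t := by
  constructor
  · intro h; cases h; rfl
  · rintro rfl; exact RPath.nil s

lemma rpath_cons_iff {δ : σ → α → σ → Prop} {s t : σ} {a : α} {w : List α} :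
    RPath δ s (a :: w) t ↔ ∃ u, δ s a u ∧ RPath δ u w t := by
  constructor
  · intro h; cases h with
    | cons hd tl => exact ⟨_, hd, tl⟩
  · rintro ⟨u, hd, tl⟩; exact RPath.cons hd tl

lemma mem_evalFrom_iff (M : NFA α σ) (S : Set σ) (w : List α) (t : σ) :
    t ∈ M.evalFrom S w ↔ ∃ s ∈ S, RPath (fun s a t => t ∈ M.step s a) s w t := by
  induction w generalizing S with
  | nil =>
    simp only [NFA.evalFrom_nil]
    constructor
    · intro h; exact ⟨t, h, RPath.nil t⟩
    · rintro ⟨s, hs, hp⟩; rw [rpath_nil_iff] at hp; subst hp; exact hs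
  | cons a w ih =>
    have : M.evalFrom S (a :: w) = M.evalFrom (M.stepSet S a) w := rfl
    rw [this, ih]
    constructor
    · rintro ⟨s', hs', hp⟩
      rw [NFA.mem_stepSet] at hs'
      obtain ⟨s, hs, hstep⟩ := hs'
      exact ⟨s, hs, RPath.cons hstep hp⟩
    · rintro ⟨s, hs, hp⟩
      rw [rpath_cons_iff] at hp
      obtain ⟨u, hd, tl⟩ := hp
      exact ⟨u, NFA.mem_stepSet.mpr ⟨s, hs, hd⟩, tl⟩

lemma finaut_mem_accepts (M : FinAut α σ) (w : List α) :
    w ∈ M.accepts ↔ ∃ t ∈ M.accept, RPath M.trans M.start w t := by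
  show w ∈ NFA.accepts _ ↔ _
  rw [NFA.mem_accepts]
  constructor
  · rintro ⟨t, ht, hev⟩
    rw [mem_evalFrom_iff] at hev
    obtain ⟨s, hs, hp⟩ := hev
    rw [Set.mem_singleton_iff] at hs; subst hs
    exact ⟨t, ht, hp⟩
  · rintro ⟨t, ht, hp⟩
    refine ⟨t, ht, ?_⟩
    rw [mem_evalFrom_iff]
    exact ⟨M.start, rfl, hp⟩

/-- A path is the same as an indexed run. -/
lemma rpath_iff_run {δ : σ → α → σ → Prop} {s t : σ} {w : List α} :
    RPath δ s w t ↔ ∃ f : ℕ → σ, f 0 = s ∧ f w.length = t ∧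
      ∀ i (h : i < w.length), δ (f i) (w[i]) (f (i + 1)) := by
  constructor
  · intro hp
    induction hp with
    | nil s => exact ⟨fun _ => s, rfl, rfl, by intro i h; simp at h⟩
    | @cons s t u a w hd tl ih =>
      obtain ⟨f, h0, hl, hs⟩ := ih
      refine ⟨fun m => Nat.rec s (fun i _ => f i) m, rfl, hl, ?_⟩
      intro i hi
      cases i with
      | zero => simpa [h0] using hd
      | succ i =>
        have hi' : i < w.length := by simpa using hi
        simpa using hs i hi'
  · rintro ⟨f, h0, hl, hs⟩
    induction w generalizing s f with
    | nil =>
      have : s = t := h0 ▸ hl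
      subst this; exact RPath.nil s
    | cons a w ih =>
      refine RPath.cons (t := f 1) (by have h' := hs 0 (by simp); rw [h0] at h'; exact h') ?_
      exact ih (f := fun i => f (i + 1)) rfl (by simpa using hl)
        (fun i h => hs (i + 1) (by simpa using h))

/-- Pumping: a long enough path can be made strictly longer. -/
lemma rpath_grow [Fintype σ] {δ : σ → α → σ → Prop} {s t : σ} {w : List α}
    (hp : RPath δ s w t) (hlen : Fintype.card σ ≤ w.length) :
    ∃ w' : List α, w.length < w'.length ∧ RPath δ s w' t := by
  obtain ⟨f, h0, hl, hs⟩ := rpath_iff_run.mp hp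
  obtain ⟨i₀, j₀, hne, heq⟩ := Fintype.exists_ne_map_eq_of_card_lt
    (fun m : Fin (w.length + 1) => f m)
    (by simpa using Nat.lt_succ_of_le hlen)
  -- wlog i < j
  obtain ⟨i, j, hij, hfij, hjle⟩ :
      ∃ i j : ℕ, i < j ∧ f i = f j ∧ j ≤ w.length := by
    have hi₀ := i₀.isLt
    have hj₀ := j₀.isLt
    rcases lt_or_gt_of_ne hne with h | h
    · exact ⟨i₀, j₀, Fin.lt_def.mp h, heq, by omega⟩
    · exact ⟨j₀, i₀, Fin.lt_def.mp h, heq.symm, by omega⟩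
  have hjle' : j ≤ w.length := by omega
  refine ⟨w.take j ++ w.drop i, ?_, ?_⟩
  · simp only [List.length_append, List.length_take, List.length_drop]
    omega
  · rw [rpath_iff_run]
    refine ⟨fun m => if m < j then f m else f (m - (j - i)), ?_, ?_, ?_⟩
    · beta_reduce
      simp only [if_pos (by omega : 0 < j)]; exact h0
    · beta_reduce
      have hlw : (w.take j ++ w.drop i).length = w.length + (j - i) := by
        simp only [List.length_append, List.length_take, List.length_drop]; omega
      rw [hlw, if_neg (by omega)]
      have : w.length + (j - i) - (j - i) = w.length := by omega
      rw [this]; exact hl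
    · intro m hm
      beta_reduce
      have hlw : (w.take j ++ w.drop i).length = w.length + (j - i) := by
        simp only [List.length_append, List.length_take, List.length_drop]; omega
      rw [hlw] at hm
      have hget : (w.take j ++ w.drop i)[m] =
          if hm' : m < j then w[m]'(by omega) else w[m - (j - i)]'(by omega) := by
        by_cases hm' : m < j
        · rw [dif_pos hm']
          rw [List.getElem_append_left (by simp only [List.length_take]; omega)]
          simp only [List.getElem_take]
        · rw [dif_neg hm']
          rw [List.getElem_append_right (by simp only [List.length_take]; omega)]
          simp only [List.getElem_drop, List.length_take]
          congr 1
          omega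
      by_cases h1 : m + 1 < j
      · rw [hget, dif_pos (by omega), if_pos (by omega), if_pos h1]
        exact hs m (by omega)
      · by_cases h2 : m + 1 = j
        · rw [hget, dif_pos (by omega), if_pos (by omega), if_neg (by omega)]
          have : m + 1 - (j - i) = i := by omega
          rw [this, hfij]
          subst h2
          exact hs m (by omega)
        · -- m ≥ j
          rw [hget, dif_neg (by omega), if_neg (by omega), if_neg (by omega)]
          have : m + 1 - (j - i) = (m - (j - i)) + 1 := by omega
          rw [this]
          exact hs (m - (j - i)) (by omega)

/-- An automaton accepting a word at least as long as its state count accepts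
infinitely many words. -/
lemma accepts_infinite (M : FinAut α σ) [Fintype σ] {x : List α}
    (hx : x ∈ M.accepts) (hlen : Fintype.card σ ≤ x.length) :
    M.accepts.Infinite := by
  have key : ∀ N, ∃ y ∈ M.accepts, N ≤ y.length ∧ Fintype.card σ ≤ y.length := by
    intro N
    induction N with
    | zero => exact ⟨x, hx, Nat.zero_le _, hlen⟩
    | succ N ih =>
      obtain ⟨y, hy, hNy, hcy⟩ := ih
      obtain ⟨t, ht, hp⟩ := (finaut_mem_accepts M y).mp hy
      obtain ⟨y', hlt, hp'⟩ := rpath_grow hp hcy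
      exact ⟨y', (finaut_mem_accepts M y').mpr ⟨t, ht, hp'⟩, by omega, by omega⟩
  intro hfin
  obtain ⟨N, hN⟩ := (hfin.image List.length).bddAbove
  obtain ⟨y, hy, hNy, -⟩ := key (N + 1)
  exact absurd (hN ⟨y, hy, rfl⟩) (by omega)

/-- Transport of an automaton along an embedding preserves the language. -/
lemma exists_finaut_fin (n : ℕ) (L : Set (List α))
    (h : ∃ (σ : Type) (_ : Fintype σ) (M : FinAut α σ),
      Fintype.card σ ≤ n ∧ M.accepts = L) :
    ∃ M : FinAut α (Fin n), M.accepts = L := by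
  obtain ⟨σ, instσ, M, hcard, hML⟩ := h
  obtain ⟨e⟩ : Nonempty (σ ↪ Fin n) :=
    Function.Embedding.nonempty_of_card_le (by simpa using hcard)
  set δ' : Fin n → α → Fin n → Prop :=
    fun s a t => ∃ s' t', M.trans s' a t' ∧ e s' = s ∧ e t' = t with hδ'
  refine ⟨⟨e M.start, e '' M.accept, δ'⟩, ?_⟩
  have hpath : ∀ (w : List α) (s : σ) (t' : Fin n),
      RPath δ' (e s) w t' ↔ ∃ t, e t = t' ∧ RPath M.trans s w t := by
    intro w
    induction w with
    | nil =>
      intro s t'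
      rw [rpath_nil_iff]
      constructor
      · rintro rfl; exact ⟨s, rfl, RPath.nil s⟩
      · rintro ⟨t, rfl, hp⟩; rw [rpath_nil_iff] at hp; rw [hp]
    | cons a w ih =>
      intro s t'
      rw [rpath_cons_iff]
      constructor
      · rintro ⟨u, ⟨s', t'', htr, hes, het⟩, hp⟩
        have : s' = s := e.injective hes
        subst this
        subst het
        obtain ⟨t, rfl, hp'⟩ := (ih t'' t').mp hp
        exact ⟨t, rfl, RPath.cons htr hp'⟩
      · rintro ⟨t, rfl, hp⟩
        rw [rpath_cons_iff] at hp
        obtain ⟨u, htr, hp'⟩ := hp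
        exact ⟨e u, ⟨s, u, htr, rfl, rfl⟩, (ih u (e t)).mpr ⟨t, rfl, hp'⟩⟩
  rw [← hML]
  ext x
  rw [finaut_mem_accepts, finaut_mem_accepts]
  constructor
  · rintro ⟨t', ht', hp⟩
    obtain ⟨t, rfl, hp'⟩ := (hpath x M.start t').mp hp
    obtain ⟨t₀, ht₀, het⟩ := ht'
    have : t₀ = t := e.injective het
    rw [this] at ht₀
    exact ⟨t, ht₀, hp'⟩
  · rintro ⟨t, ht, hp⟩
    exact ⟨e t, ⟨t, ht, rfl⟩, (hpath x M.start (e t)).mpr ⟨t, rfl, hp⟩⟩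

section Product

variable {ι : Type*} (S : Set ι) (M : ι → FinAut α τ)

/-- Product automaton over an index set, constrained only on indices in `S`. -/
def prodAut : FinAut α (ι → τ) where
  start := fun i => (M i).start
  accept := {f | ∀ i ∈ S, f i ∈ (M i).accept}
  trans := fun f a g => ∀ i ∈ S, (M i).trans (f i) a (g i)

lemma prodAut_accepts :
    (prodAut S M).accepts = {x | ∀ i ∈ S, x ∈ (M i).accepts} := by
  classical
  have hproj : ∀ {w : List α} {f g : ι → τ}, RPath (prodAut S M).trans f w g →
      ∀ i ∈ S, RPath (M i).trans (f i) w (g i) := by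
    intro w f g hp
    induction hp with
    | nil => exact fun i _ => RPath.nil _
    | cons hd tl ih => exact fun i hi => RPath.cons (hd i hi) (ih i hi)
  have hcomb : ∀ (w : List α) (f g : ι → τ),
      (∀ i ∈ S, RPath (M i).trans (f i) w (g i)) → (∀ i ∉ S, f i = g i) →
      RPath (prodAut S M).trans f w g := by
    intro w
    induction w with
    | nil =>
      intro f g h1 h2
      have : f = g := by
        funext i
        by_cases hi : i ∈ S
        · exact rpath_nil_iff.mp (h1 i hi)
        · exact h2 i hi
      rw [this]; exact RPath.nil g
    | cons a w ih =>
      intro f g h1 h2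
      have h3 : ∀ i, i ∈ S → ∃ u, (M i).trans (f i) a u ∧ RPath (M i).trans u w (g i) :=
        fun i hi => rpath_cons_iff.mp (h1 i hi)
      choose u hu1 hu2 using h3
      set f' : ι → τ := fun i => if hi : i ∈ S then u i hi else f i with hf'
      have hstep : (prodAut S M).trans f a f' :=
        fun i hi => by simp only [hf', dif_pos hi]; exact hu1 i hi
      refine RPath.cons hstep ?_
      refine ih f' g (fun i hi => ?_) (fun i hi => ?_)
      · simp only [hf', dif_pos hi]; exact hu2 i hi
      · simp only [hf', dif_neg hi]; exact h2 i hi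
  ext x
  rw [finaut_mem_accepts]
  constructor
  · rintro ⟨g, hg, hp⟩ i hi
    rw [finaut_mem_accepts]
    exact ⟨g i, hg i hi, hproj hp i hi⟩
  · intro hx
    have h4 : ∀ i, i ∈ S → ∃ t, t ∈ (M i).accept ∧ RPath (M i).trans (M i).start x t := by
      intro i hi
      obtain ⟨t, ht, hp⟩ := (finaut_mem_accepts (M i) x).mp (hx i hi)
      exact ⟨t, ht, hp⟩
    choose t ht1 ht2 using h4
    set g : ι → τ := fun i => if hi : i ∈ S then t i hi else (M i).start with hg
    refine ⟨g, fun i hi => by simp only [hg, dif_pos hi]; exact ht1 i hi, ?_⟩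
    refine hcomb x _ g (fun i hi => ?_) (fun i hi => ?_)
    · simp only [hg, dif_pos hi]; exact ht2 i hi
    · simp only [hg, dif_neg hi]; rfl

end Product

/-- Binary encoding of words over `Fin 2`, injective, and `< 2 ^ (len + 1)`. -/
def enc : List (Fin 2) → ℕ
  | [] => 1
  | a :: w => 2 * enc w + a.val

lemma enc_pos : ∀ w : List (Fin 2), 1 ≤ enc w
  | [] => le_refl 1
  | a :: w => by have := enc_pos w; simp only [enc]; omega

lemma enc_lt : ∀ w : List (Fin 2), enc w < 2 ^ (w.length + 1)
  | [] => by simp [enc]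
  | a :: w => by
    have := enc_lt w
    have ha : (a : ℕ) < 2 := a.isLt
    simp only [enc, List.length_cons]
    rw [pow_succ]
    omega

lemma enc_injective : Function.Injective enc := by
  intro u
  induction u with
  | nil =>
    intro v hv
    cases v with
    | nil => rfl
    | cons b v =>
      exfalso
      have := enc_pos v
      simp only [enc] at hv
      omega
  | cons a u ih =>
    intro v hv
    cases v with
    | nil =>
      exfalso
      have := enc_pos u
      simp only [enc] at hv
      omega
    | cons b v =>
      simp only [enc] at hv
      have ha : (a : ℕ) < 2 := a.isLt
      have hb : (b : ℕ) < 2 := b.isLt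
      have hab : (a : ℕ) = (b : ℕ) := by omega
      have huv : enc u = enc v := by omega
      rw [ih huv, Fin.ext hab]

lemma exists_long_word (m : ℕ) (ws : List (List (Fin 2))) (hnd : ws.Nodup)
    (hlen : 2 ^ m ≤ ws.length) : ∃ w ∈ ws, m ≤ w.length := by
  by_contra h
  push_neg at h
  classical
  have hsub : (ws.map enc).toFinset ⊆ Finset.Ico 1 (2 ^ m) := by
    intro x hx
    rw [List.mem_toFinset, List.mem_map] at hx
    obtain ⟨w, hw, rfl⟩ := hx
    rw [Finset.mem_Ico]
    refine ⟨enc_pos w, lt_of_lt_of_le (enc_lt w) ?_⟩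
    exact Nat.pow_le_pow_right (by norm_num) (h w hw)
  have hnd' : (ws.map enc).Nodup := hnd.map enc_injective
  have hcard : (ws.map enc).toFinset.card = ws.length := by
    rw [List.toFinset_card_of_nodup hnd', List.length_map]
  have := Finset.card_le_card hsub
  rw [hcard, Nat.card_Ico] at this
  have h1 : 1 ≤ 2 ^ m := Nat.one_le_two_pow
  omega

end MGenAux

open MGenAux in
/-- A family of `k` infinite regular languages over the binary alphabet, each accepted by a
finite automaton with at most `n` states, is `2 ^ (n ^ k)`-generatable. -/
theorem mGeneratable_of_nfa_family (n k : ℕ) (hn : 1 ≤ n) (hk : 1 ≤ k)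
    (F : Set (Set (List (Fin 2)))) (hfin : F.Finite) (hcard : F.ncard = k)
    (hinf : ∀ L ∈ F, L.Infinite)
    (hacc : ∀ L ∈ F, ∃ (σ : Type) (_ : Fintype σ) (M : FinAut (Fin 2) σ),
      Fintype.card σ ≤ n ∧ M.accepts = L) :
    IsMGeneratable (2 ^ n ^ k) F := by
  classical
  have hacc2 : ∀ L ∈ F, ∃ M : FinAut (Fin 2) (Fin n), M.accepts = L :=
    fun L hL => exists_finaut_fin n L (hacc L hL)
  choose M hM using hacc2
  haveI : Fintype F := hfin.fintype
  have hcardF : Fintype.card F = k := by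
    rw [← Nat.card_eq_fintype_card, Nat.card_coe_set_eq, hcard]
  set M' : F → FinAut (Fin 2) (Fin n) := fun L => M L L.2 with hM'
  refine ⟨fun ws => ⋂₀ {L | L ∈ F ∧ ∀ w ∈ ws, w ∈ L}, ?_⟩
  intro L hL ws hnd hlen hmem
  set S : Set (↥F) := {L' | ∀ w ∈ ws, w ∈ (L' : Set (List (Fin 2)))} with hS
  set P := prodAut S M' with hP
  have hPacc : P.accepts = {x | ∀ L' ∈ S, x ∈ (M' L').accepts} := prodAut_accepts S M'
  have hGP : ⋂₀ {L | L ∈ F ∧ ∀ w ∈ ws, w ∈ L} = P.accepts := by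
    ext x
    rw [Set.mem_sInter, hPacc]
    constructor
    · intro hx L' hL'
      rw [hM L' L'.2]
      exact hx L' ⟨L'.2, hL'⟩
    · intro hx L' ⟨h1, h2⟩
      have := hx ⟨L', h1⟩ h2
      rwa [hM L' h1] at this
  refine ⟨?_, ?_⟩
  · -- infinite
    show (⋂₀ {L | L ∈ F ∧ ∀ w ∈ ws, w ∈ L}).Infinite
    rw [hGP]
    have hcardP : Fintype.card (↥F → Fin n) = n ^ k := by
      rw [Fintype.card_fun, Fintype.card_fin, hcardF]
    obtain ⟨w₀, hw₀, hw₀len⟩ := exists_long_word (n ^ k) ws hnd hlen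
    have hw₀P : w₀ ∈ P.accepts := by
      rw [hPacc]
      intro L' hL'
      rw [hM L' L'.2]
      exact hL' w₀ hw₀
    exact accepts_infinite P hw₀P (by rw [hcardP]; exact hw₀len)
  · -- subset
    show ⋂₀ {L | L ∈ F ∧ ∀ w ∈ ws, w ∈ L} ⊆ L
    intro x hx
    exact Set.mem_sInter.mp hx L ⟨hL, hmem⟩
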